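/- Let λ κ : ℝ with λ ≠ 0, κ / λ > 0, and κ / λ ∉ Set.range (Int.cast : ℤ → ℝ). Suppose F : ℝ → ℝ satisfies F (Real.exp (λ * t) * u) = Real.exp (κ * t) * F u for all t u : ℝ, and that F is (⌊κ/λ⌋ + 1)-times continuously differentiable on ℝ (ContDiff ℝ (⌊κ/λ⌋ + 1) F). Then F = 0. -/

import Mathlib

open Real Filter Topology

private lemma aux_rpow_neg_tendsto {p : ℝ} (hp : p < 0) :
    Tendsto (fun x : ℝ => x ^ p) (𝓝[>] (0:ℝ)) atTop := by
  have h1 : Tendsto (fun x : ℝ => (x⁻¹) ^ (-p)) (𝓝[>] (0:ℝ)) atTop :=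
    (tendsto_rpow_atTop (neg_pos.2 hp)).comp tendsto_inv_nhdsGT_zero
  refine h1.congr' ?_
  filter_upwards [self_mem_nhdsWithin] with x hx
  rw [Real.inv_rpow (le_of_lt hx), Real.rpow_neg (le_of_lt hx), inv_inv]

private lemma aux_key (F : ℝ → ℝ) (c α : ℝ) (n : ℕ) (h1 : (n : ℝ) < α) (h2 : α < n + 1)
    (hs : ContDiff ℝ ((n : ℕ∞) + 1) F) (hFu : ∀ u : ℝ, 0 < u → F u = u ^ α * c) :
    c = 0 := by
  have hder : ∀ k : ℕ, ∀ u : ℝ, 0 < u →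
      iteratedDeriv k F u = (∏ j ∈ Finset.range k, (α - j)) * (u ^ (α - k) * c) := by
    intro k
    induction k with
    | zero => intro u hu; simpa using hFu u hu
    | succ k ih =>
      intro u hu
      have hev : iteratedDeriv k F =ᶠ[nhds u]
          fun x => (∏ j ∈ Finset.range k, (α - j)) * (x ^ (α - (k:ℝ)) * c) := by
        filter_upwards [isOpen_Ioi.mem_nhds hu] with x hx
        exact ih x hx
      rw [iteratedDeriv_succ, hev.deriv_eq]
      have hd : HasDerivAt (fun x : ℝ => (∏ j ∈ Finset.range k, (α - j)) * (x ^ (α - (k:ℝ)) * c))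
          ((∏ j ∈ Finset.range k, (α - j)) * ((α - (k:ℝ)) * u ^ (α - (k:ℝ) - 1) * c)) u :=
        ((Real.hasDerivAt_rpow_const (Or.inl hu.ne')).mul_const c).const_mul _
      rw [hd.deriv, Finset.prod_range_succ]
      push_cast
      rw [show α - ((k:ℝ) + 1) = α - (k:ℝ) - 1 from by ring]
      ring
  by_contra hc
  set C := ∏ j ∈ Finset.range (n+1), (α - (j:ℝ)) with hC
  have hCpos : 0 < C := by
    refine Finset.prod_pos fun j hj => ?_
    have hj' : (j : ℝ) ≤ n := by
      exact_mod_cast Nat.lt_succ_iff.mp (Finset.mem_range.mp hj)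
    linarith
  have hcontH : Continuous (iteratedDeriv (n+1) F) := by
    refine hs.continuous_iteratedDeriv (n+1) ?_
    exact_mod_cast le_refl _
  have ht1 : Tendsto (iteratedDeriv (n+1) F) (𝓝[>] (0:ℝ)) (nhds (iteratedDeriv (n+1) F 0)) :=
    (hcontH.continuousAt.tendsto).mono_left nhdsWithin_le_nhds
  have hev : (fun u : ℝ => |C| * |c| * u ^ (α - ((n:ℝ)+1))) =ᶠ[𝓝[>] (0:ℝ)]
      fun u => |iteratedDeriv (n+1) F u| := by
    filter_upwards [self_mem_nhdsWithin] with u hu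
    have := hder (n+1) u hu
    rw [this]
    push_cast
    rw [abs_mul, abs_mul, abs_of_nonneg (Real.rpow_nonneg (le_of_lt hu) _)]
    ring
  have ht2 : Tendsto (fun u : ℝ => |C| * |c| * u ^ (α - ((n:ℝ)+1))) (𝓝[>] (0:ℝ)) atTop := by
    refine Tendsto.const_mul_atTop ?_ (aux_rpow_neg_tendsto (by linarith))
    exact mul_pos (abs_pos.mpr hCpos.ne') (abs_pos.mpr hc)
  have ht3 : Tendsto (fun u : ℝ => |C| * |c| * u ^ (α - ((n:ℝ)+1))) (𝓝[>] (0:ℝ))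
      (nhds |iteratedDeriv (n+1) F 0|) := (ht1.abs.congr' hev.symm)
  exact not_tendsto_atTop_of_tendsto_nhds ht3 ht2

theorem stmt_17 (lam κ : ℝ) (hlam : lam ≠ 0) (hpos : 0 < κ / lam)
    (hnotint : κ / lam ∉ Set.range (Int.cast : ℤ → ℝ))
    (F : ℝ → ℝ)
    (hF : ∀ t u : ℝ, F (Real.exp (lam * t) * u) = Real.exp (κ * t) * F u)
    (hsmooth : ContDiff ℝ ((⌊κ / lam⌋₊ : ℕ∞) + 1) F) :
    F = 0 := by
  set α := κ / lam with hα
  set n := ⌊α⌋₊ with hn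
  have hk : κ ≠ 0 := by
    intro h
    have hz : α = 0 := by rw [hα, h, zero_div]
    rw [hz] at hpos; exact lt_irrefl _ hpos
  have hne : α ≠ (n : ℝ) := by
    intro h; exact hnotint ⟨(n : ℤ), by push_cast; exact h.symm⟩
  have h1 : (n : ℝ) < α := lt_of_le_of_ne (Nat.floor_le hpos.le) (Ne.symm hne)
  have h2 : α < n + 1 := Nat.lt_floor_add_one α
  -- F 0 = 0
  have hF0 : F 0 = 0 := by
    have h := hF κ⁻¹ 0
    rw [mul_zero, mul_inv_cancel₀ hk] at h
    have he : (1:ℝ) + 1 < Real.exp 1 := by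
      have := Real.add_one_lt_exp (one_ne_zero (α := ℝ)); linarith
    have h' : (Real.exp 1 - 1) * F 0 = 0 := by linarith [h]
    rcases mul_eq_zero.mp h' with h'' | h''
    · linarith
    · exact h''
  -- scaling identities
  have hexp1 : ∀ u : ℝ, 0 < u → Real.exp (lam * (Real.log u / lam)) = u := by
    intro u hu
    rw [show lam * (Real.log u / lam) = Real.log u from by field_simp]
    exact Real.exp_log hu
  have hexp2 : ∀ u : ℝ, 0 < u → Real.exp (κ * (Real.log u / lam)) = u ^ α := by
    intro u hu
    rw [Real.rpow_def_of_pos hu]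
    congr 1
    field_simp [hα]
    rw [hα]; field_simp
  have hposF : ∀ u : ℝ, 0 < u → F u = u ^ α * F 1 := by
    intro u hu
    have h := hF (Real.log u / lam) 1
    rw [mul_one, hexp1 u hu, hexp2 u hu] at h
    exact h
  have hnegF : ∀ u : ℝ, 0 < u → F (-u) = u ^ α * F (-1) := by
    intro u hu
    have h := hF (Real.log u / lam) (-1)
    rw [mul_neg_one, hexp1 u hu, hexp2 u hu] at h
    exact h
  have hF1 : F 1 = 0 := aux_key F (F 1) α n h1 h2 hsmooth hposF
  have hFm1 : F (-1) = 0 := by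
    refine aux_key (fun u => F (-u)) (F (-1)) α n h1 h2 ?_ ?_
    · exact hsmooth.comp contDiff_neg
    · intro u hu; exact hnegF u hu
  funext u
  rcases lt_trichotomy u 0 with hu | hu | hu
  · have := hnegF (-u) (by linarith)
    rw [neg_neg, hFm1, mul_zero] at this
    simpa using this
  · simpa [hu] using hF0
  · have := hposF u hu
    rw [hF1, mul_zero] at this
    simpa using this
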